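/- For any integers n and k with 1 ≤ k < n, the metric dimension of the Johnson graph J(n,k) satisfies β(J(n,k)) ≤ n. -/

import Mathlib

/-- The Johnson graph `J(n,k)`: vertices are the `k`-element subsets of `{1,...,n}`,
two vertices adjacent iff their intersection has `k-1` elements. -/
def johnsonGraph (n k : ℕ) : SimpleGraph {s : Finset (Fin n) // s.card = k} where
  Adj U W := U ≠ W ∧ (U.1 ∩ W.1).card = k - 1
  symm := by
    constructor
    intro U W h
    exact ⟨h.1.symm, by rw [Finset.inter_comm]; exact h.2⟩
  loopless := by
    constructor
    intro U h
    exact h.1 rfl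

/-- The Kneser graph `K(n,k)`: vertices are the `k`-element subsets of `{1,...,n}`,
two vertices adjacent iff the corresponding subsets are disjoint. -/
def kneserGraph (n k : ℕ) : SimpleGraph {s : Finset (Fin n) // s.card = k} where
  Adj U W := U ≠ W ∧ Disjoint U.1 W.1
  symm := by
    constructor
    intro U W h
    exact ⟨h.1.symm, h.2.symm⟩
  loopless := by
    constructor
    intro U h
    exact h.1 rfl

/-- A set `S` of vertices is a resolving set for `G` if every pair of distinct
vertices is resolved by some vertex of `S`, i.e. is at different distances from it. -/
def resolvingSet {V : Type*} (G : SimpleGraph V) (S : Set V) : Prop :=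
  ∀ u v : V, u ≠ v → ∃ x ∈ S, G.dist u x ≠ G.dist v x

/-- The metric dimension `β(G)`: the minimum cardinality of a resolving set for `G`. -/
noncomputable def metricDim {V : Type*} (G : SimpleGraph V) : ℕ :=
  sInf {m | ∃ S : Finset V, resolvingSet G ↑S ∧ S.card = m}

namespace JohnsonAux

open Finset SimpleGraph

variable {n k : ℕ}

abbrev JV (n k : ℕ) := {s : Finset (Fin n) // s.card = k}

/-- There is a walk of length exactly `k - |U ∩ W|` between any two vertices. -/
lemma exists_walk (hk1 : 1 ≤ k) :
    ∀ m (U W : JV n k), (U.1 \ W.1).card = m →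
      ∃ p : (johnsonGraph n k).Walk U W, p.length = k - (U.1 ∩ W.1).card := by
  intro m
  induction m using Nat.strong_induction_on with
  | _ m ih =>
  intro U W hm
  by_cases hUW : U = W
  · subst hUW
    refine ⟨SimpleGraph.Walk.nil, ?_⟩
    simp [U.2]
  · have hUWne : U.1 ≠ W.1 := fun h => hUW (Subtype.ext h)
    have ha : (U.1 \ W.1).Nonempty := by
      rw [Finset.sdiff_nonempty]
      intro hsub
      exact hUWne (Finset.eq_of_subset_of_card_le hsub (by rw [U.2, W.2]))
    have hb : (W.1 \ U.1).Nonempty := by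
      rw [Finset.sdiff_nonempty]
      intro hsub
      exact hUWne ((Finset.eq_of_subset_of_card_le hsub (by rw [U.2, W.2])).symm)
    obtain ⟨a, haU⟩ := ha
    obtain ⟨b, hbW⟩ := hb
    have haU' : a ∈ U.1 := (Finset.mem_sdiff.mp haU).1
    have haW : a ∉ W.1 := (Finset.mem_sdiff.mp haU).2
    have hbW' : b ∈ W.1 := (Finset.mem_sdiff.mp hbW).1
    have hbU : b ∉ U.1 := (Finset.mem_sdiff.mp hbW).2
    have hbe : b ∉ U.1.erase a := fun h => hbU (Finset.mem_of_mem_erase h)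
    have hU'card : (insert b (U.1.erase a)).card = k := by
      rw [Finset.card_insert_of_notMem hbe, Finset.card_erase_of_mem haU', U.2]
      omega
    set Uv' : JV n k := ⟨insert b (U.1.erase a), hU'card⟩ with hUv'
    have hinterUU' : U.1 ∩ Uv'.1 = U.1.erase a := by
      rw [hUv', Finset.inter_insert_of_notMem hbU]
      ext x
      simp only [Finset.mem_inter, Finset.mem_erase]
      tauto
    have hadj : (johnsonGraph n k).Adj U Uv' := by
      constructor
      · intro h
        apply hbU
        rw [h]
        exact Finset.mem_insert_self _ _
      · rw [hinterUU', Finset.card_erase_of_mem haU', U.2]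
    have hinter' : (Uv'.1 ∩ W.1) = insert b (U.1 ∩ W.1) := by
      rw [hUv', Finset.insert_inter_of_mem hbW']
      congr 1
      ext x
      simp only [Finset.mem_inter, Finset.mem_erase]
      constructor
      · tauto
      · rintro ⟨h1, h2⟩
        exact ⟨⟨fun he => haW (he ▸ h2), h1⟩, h2⟩
    have hbnotin : b ∉ U.1 ∩ W.1 := fun h => hbU (Finset.mem_inter.mp h).1
    have hcard' : (Uv'.1 ∩ W.1).card = (U.1 ∩ W.1).card + 1 := by
      rw [hinter', Finset.card_insert_of_notMem hbnotin]
    have hsdiff : (Uv'.1 \ W.1) = (U.1 \ W.1).erase a := by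
      rw [hUv']
      rw [Finset.insert_sdiff_of_mem _ hbW', Finset.erase_sdiff_comm]
    have hmpos : 0 < m := by
      rw [← hm]
      exact Finset.card_pos.mpr ⟨a, haU⟩
    have hsdcard : (Uv'.1 \ W.1).card = m - 1 := by
      rw [hsdiff, Finset.card_erase_of_mem haU, hm]
    obtain ⟨p', hp'⟩ := ih (m - 1) (by omega) Uv' W hsdcard
    refine ⟨SimpleGraph.Walk.cons hadj p', ?_⟩
    have hle : (Uv'.1 ∩ W.1).card ≤ k := by
      calc (Uv'.1 ∩ W.1).card ≤ Uv'.1.card := Finset.card_le_card Finset.inter_subset_left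
        _ = k := Uv'.2
    rw [SimpleGraph.Walk.length_cons, hp', hcard']
    omega

/-- Every walk has length at least `k - |U ∩ W|`. -/
lemma walk_le {U W : JV n k} (p : (johnsonGraph n k).Walk U W) :
    k ≤ p.length + (U.1 ∩ W.1).card := by
  induction p with
  | nil =>
    rename_i u
    simp [u.2]
  | cons h q ih =>
    rename_i u v w
    have h1 : (v.1 ∩ w.1).card ≤ (u.1 ∩ w.1).card + (v.1 \ u.1).card := by
      have hsub : v.1 ∩ w.1 ⊆ (u.1 ∩ w.1) ∪ (v.1 \ u.1) := by
        intro x hx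
        rw [Finset.mem_inter] at hx
        by_cases hxu : x ∈ u.1
        · exact Finset.mem_union_left _ (Finset.mem_inter.mpr ⟨hxu, hx.2⟩)
        · exact Finset.mem_union_right _ (Finset.mem_sdiff.mpr ⟨hx.1, hxu⟩)
      calc (v.1 ∩ w.1).card ≤ ((u.1 ∩ w.1) ∪ (v.1 \ u.1)).card := Finset.card_le_card hsub
        _ ≤ (u.1 ∩ w.1).card + (v.1 \ u.1).card := Finset.card_union_le _ _
    have h2 : (v.1 \ u.1).card + (v.1 ∩ u.1).card = v.1.card :=
      Finset.card_sdiff_add_card_inter _ _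
    have h3 : (v.1 ∩ u.1).card = k - 1 := by
      rw [Finset.inter_comm]; exact h.2
    have h4 : (u.1 ∩ v.1).card ≤ k := by
      calc (u.1 ∩ v.1).card ≤ u.1.card := Finset.card_le_card Finset.inter_subset_left
        _ = k := u.2
    rw [SimpleGraph.Walk.length_cons]
    have hv := v.2
    rw [Finset.inter_comm] at h4
    omega

/-- Distance formula in the Johnson graph. -/
lemma johnson_dist (hk1 : 1 ≤ k) (U W : JV n k) :
    (johnsonGraph n k).dist U W = k - (U.1 ∩ W.1).card := by
  obtain ⟨p, hp⟩ := exists_walk hk1 (U.1 \ W.1).card U W rfl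
  have h1 : (johnsonGraph n k).dist U W ≤ k - (U.1 ∩ W.1).card :=
    hp ▸ SimpleGraph.dist_le p
  have hr : (johnsonGraph n k).Reachable U W := ⟨p⟩
  obtain ⟨q, hq⟩ := hr.exists_walk_length_eq_dist
  have h2 := walk_le q
  have h3 : (U.1 ∩ W.1).card ≤ k := by
    calc (U.1 ∩ W.1).card ≤ U.1.card := Finset.card_le_card Finset.inter_subset_left
      _ = k := U.2
  omega

lemma filter_card (c : ℕ) (hc : c ≤ n) :
    (Finset.univ.filter (fun x : Fin n => c ≤ x.val)).card = n - c := by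
  rw [← Nat.card_Ico c n]
  refine Finset.card_bij' (fun (a : Fin n) _ => a.val)
    (fun m hm => (⟨m, (Finset.mem_Ico.mp hm).2⟩ : Fin n)) ?_ ?_ ?_ ?_
  · intro a ha
    simp only [Finset.mem_filter, Finset.mem_univ, true_and] at ha
    exact Finset.mem_Ico.mpr ⟨ha, a.isLt⟩
  · intro m hm
    simp only [Finset.mem_filter, Finset.mem_univ, true_and]
    exact (Finset.mem_Ico.mp hm).1
  · intro a ha
    rfl
  · intro m hm
    rfl

end JohnsonAux

open Finset SimpleGraph JohnsonAux in
/-- For `1 ≤ k < n`, the metric dimension of the Johnson graph `J(n,k)` is at most `n`. -/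
theorem johnson_metricDim_le_n (n k : ℕ) (hk : 1 ≤ k) (hkn : k < n) :
    metricDim (johnsonGraph n k) ≤ n := by
  have hn2 : 2 ≤ n := by omega
  set c := n - k + 1 with hc
  have hc2 : 2 ≤ c := by omega
  have hcn : c ≤ n := by omega
  set T : Finset (Fin n) := Finset.univ.filter (fun x : Fin n => c ≤ x.val) with hT
  have hTcard : T.card = k - 1 := by
    rw [hT, filter_card c hcn]; omega
  have hmemT : ∀ x : Fin n, x ∈ T ↔ c ≤ x.val := by
    intro x; simp [hT]
  set z0 : Fin n := ⟨0, by omega⟩ with hz0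
  set z1 : Fin n := ⟨1, by omega⟩ with hz1
  have hz0T : z0 ∉ T := by rw [hmemT]; simp [hz0]
  have hz1T : z1 ∉ T := by rw [hmemT]; simp [hz1]; omega
  have hz01 : z0 ≠ z1 := by
    intro h
    have := congrArg Fin.val h
    simp [hz0, hz1] at this
  -- the resolving family
  set f : Fin n → Finset (Fin n) :=
    fun i => if i ∈ T then {z0, z1} ∪ T.erase i else insert i T with hf
  have hfcard : ∀ i, (f i).card = k := by
    intro i
    by_cases hi : i ∈ T
    · have hk2 : 2 ≤ k := by
        have : 0 < T.card := Finset.card_pos.mpr ⟨i, hi⟩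
        omega
      rw [hf]
      simp only [if_pos hi]
      have hdisj : Disjoint ({z0, z1} : Finset (Fin n)) (T.erase i) := by
        rw [Finset.disjoint_left]
        intro x hx hx'
        have hxT : x ∈ T := Finset.mem_of_mem_erase hx'
        rcases Finset.mem_insert.mp hx with h | h
        · exact hz0T (h ▸ hxT)
        · exact hz1T ((Finset.mem_singleton.mp h) ▸ hxT)
      rw [Finset.card_union_of_disjoint hdisj, Finset.card_erase_of_mem hi, hTcard]
      have h2 : ({z0, z1} : Finset (Fin n)).card = 2 := Finset.card_pair hz01
      omega
    · rw [hf]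
      simp only [if_neg hi]
      rw [Finset.card_insert_of_notMem hi, hTcard]
      omega
  -- intersection computations
  have hA : ∀ (U : Finset (Fin n)) (i : Fin n), i ∉ T →
      (U ∩ f i).card = (U ∩ T).card + (if i ∈ U then 1 else 0) := by
    intro U i hi
    rw [hf]
    simp only [if_neg hi]
    by_cases hiU : i ∈ U
    · rw [Finset.inter_insert_of_mem hiU,
        Finset.card_insert_of_notMem (fun h => hi (Finset.mem_inter.mp h).2), if_pos hiU]
    · rw [Finset.inter_insert_of_notMem hiU, if_neg hiU]
      omega
  have hB : ∀ (U : Finset (Fin n)) (t : Fin n), t ∈ T →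
      (U ∩ f t).card + (if t ∈ U then 1 else 0)
        = (if z0 ∈ U then 1 else 0) + (if z1 ∈ U then 1 else 0) + (U ∩ T).card := by
    intro U t ht
    rw [hf]
    simp only [if_pos ht]
    rw [Finset.inter_union_distrib_left]
    have hdisj : Disjoint (U ∩ ({z0, z1} : Finset (Fin n))) (U ∩ T.erase t) := by
      rw [Finset.disjoint_left]
      intro x hx hx'
      have h1 : x ∈ ({z0, z1} : Finset (Fin n)) := (Finset.mem_inter.mp hx).2
      have h2 : x ∈ T := Finset.mem_of_mem_erase (Finset.mem_inter.mp hx').2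
      rcases Finset.mem_insert.mp h1 with h | h
      · exact hz0T (h ▸ h2)
      · exact hz1T ((Finset.mem_singleton.mp h) ▸ h2)
    rw [Finset.card_union_of_disjoint hdisj]
    have e1 : (U ∩ ({z0, z1} : Finset (Fin n))).card
        = (if z0 ∈ U then 1 else 0) + (if z1 ∈ U then 1 else 0) := by
      by_cases h0 : z0 ∈ U <;> by_cases h1 : z1 ∈ U
      · rw [Finset.inter_insert_of_mem h0, if_pos h0, if_pos h1]
        rw [Finset.inter_singleton_of_mem h1]
        exact Finset.card_pair hz01
      · rw [Finset.inter_insert_of_mem h0, if_pos h0, if_neg h1]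
        rw [Finset.inter_singleton_of_notMem h1]
        simp
      · rw [Finset.inter_insert_of_notMem h0, if_neg h0, if_pos h1]
        rw [Finset.inter_singleton_of_mem h1]
        simp
      · rw [Finset.inter_insert_of_notMem h0, if_neg h0, if_neg h1]
        rw [Finset.inter_singleton_of_notMem h1]
        simp
    have e2 : (U ∩ T.erase t).card + (if t ∈ U then 1 else 0) = (U ∩ T).card := by
      have he : U ∩ T.erase t = (U ∩ T).erase t := by
        ext x
        simp only [Finset.mem_inter, Finset.mem_erase]
        tauto
      rw [he]
      by_cases htU : t ∈ U
      · have htm : t ∈ U ∩ T := Finset.mem_inter.mpr ⟨htU, ht⟩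
        rw [Finset.card_erase_of_mem htm, if_pos htU]
        have : 0 < (U ∩ T).card := Finset.card_pos.mpr ⟨t, htm⟩
        omega
      · rw [Finset.erase_eq_of_notMem (fun h => htU (Finset.mem_inter.mp h).1), if_neg htU]
        omega
    omega
  -- injectivity of the intersection vector
  have hinj : ∀ U V : Finset (Fin n), U.card = k → V.card = k →
      (∀ i, (U ∩ f i).card = (V ∩ f i).card) → U = V := by
    intro U V hU hV heq
    by_cases hab : (U ∩ T).card = (V ∩ T).card
    · have e0 : (if z0 ∈ U then 1 else 0) = (if z0 ∈ V then 1 else 0) := by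
        have h := heq z0
        rw [hA U z0 hz0T, hA V z0 hz0T] at h
        omega
      have e1 : (if z1 ∈ U then 1 else 0) = (if z1 ∈ V then 1 else 0) := by
        have h := heq z1
        rw [hA U z1 hz1T, hA V z1 hz1T] at h
        omega
      ext x
      by_cases hx : x ∈ T
      · have h1 := hB U x hx
        have h2 := hB V x hx
        have h3 := heq x
        constructor
        · intro hxU
          by_contra hxV
          rw [if_pos hxU] at h1
          rw [if_neg hxV] at h2
          omega
        · intro hxV
          by_contra hxU
          rw [if_neg hxU] at h1
          rw [if_pos hxV] at h2
          omega
      · have h := heq x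
        rw [hA U x hx, hA V x hx] at h
        constructor
        · intro hxU
          by_contra hxV
          rw [if_pos hxU, hab] at h
          rw [if_neg hxV] at h
          omega
        · intro hxV
          by_contra hxU
          rw [if_neg hxU, hab] at h
          rw [if_pos hxV] at h
          omega
    · exfalso
      rcases Nat.lt_or_ge (U ∩ T).card (V ∩ T).card with hlt | hge
      · have hVT : V ⊆ T := by
          intro x hxV
          by_contra hxT
          have h := heq x
          rw [hA U x hxT, hA V x hxT, if_pos hxV] at h
          by_cases hxU : x ∈ U
          · rw [if_pos hxU] at h; omega
          · rw [if_neg hxU] at h; omega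
        have := Finset.card_le_card hVT
        omega
      · have hUT : U ⊆ T := by
          intro x hxU
          by_contra hxT
          have h := heq x
          rw [hA U x hxT, hA V x hxT, if_pos hxU] at h
          by_cases hxV : x ∈ V
          · rw [if_pos hxV] at h; omega
          · rw [if_neg hxV] at h; omega
        have := Finset.card_le_card hUT
        omega
  -- assemble the resolving set
  set g : Fin n → JV n k := fun i => ⟨f i, hfcard i⟩ with hg
  set S : Finset (JV n k) := Finset.univ.image g with hS
  have hres : resolvingSet (johnsonGraph n k) ↑S := by
    intro U V hUV
    have hUV' : U.1 ≠ V.1 := fun h => hUV (Subtype.ext h)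
    have hne : ¬ ∀ i, (U.1 ∩ f i).card = (V.1 ∩ f i).card :=
      fun h => hUV' (hinj _ _ U.2 V.2 h)
    push_neg at hne
    obtain ⟨i, hi⟩ := hne
    refine ⟨g i, by simp [hS], ?_⟩
    rw [johnson_dist hk U (g i), johnson_dist hk V (g i)]
    have h1 : (U.1 ∩ (g i).1).card ≤ k :=
      le_of_le_of_eq (Finset.card_le_card Finset.inter_subset_left) U.2
    have h2 : (V.1 ∩ (g i).1).card ≤ k :=
      le_of_le_of_eq (Finset.card_le_card Finset.inter_subset_left) V.2
    have hgi : (g i).1 = f i := rfl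
    rw [hgi] at h1 h2 ⊢
    omega
  calc metricDim (johnsonGraph n k) ≤ S.card := Nat.sInf_le ⟨S, hres, rfl⟩
    _ ≤ (Finset.univ : Finset (Fin n)).card := Finset.card_image_le
    _ = n := by simp
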